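/- Let d ≥ 3 be an odd integer. Then Y + Z divides φ_d in F_2[X,Y,Z], but (Y + Z)^2 does not divide φ_d. -/

import Mathlib

open MvPolynomial

noncomputable section PhiAux

/-- an algebra endomorphism sending `X 0 ↦ X 1 + X 2`, `X 1 ↦ X 1`, `X 2 ↦ X 0`. -/
noncomputable def phiAuxE : MvPolynomial (Fin 3) (ZMod 2) →ₐ[ZMod 2] MvPolynomial (Fin 3) (ZMod 2) :=
  aeval (fun i => if i = 0 then X 1 + X 2 else if i = 1 then X 1 else X 0)

noncomputable def phiAuxE' : MvPolynomial (Fin 3) (ZMod 2) →ₐ[ZMod 2] MvPolynomial (Fin 3) (ZMod 2) :=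
  aeval (fun i => if i = 0 then X 2 else if i = 1 then X 1 else X 0 + X 1)

lemma phiAux_two : (2 : MvPolynomial (Fin 3) (ZMod 2)) = 0 := CharTwo.two_eq_zero

lemma phiAuxE_comp : phiAuxE.comp phiAuxE' = AlgHom.id _ _ := by
  apply MvPolynomial.algHom_ext
  intro i
  fin_cases i <;> simp [phiAuxE, phiAuxE'] <;> linear_combination (X 1 : MvPolynomial (Fin 3) (ZMod 2)) * phiAux_two

lemma phiAuxE'_comp : phiAuxE'.comp phiAuxE = AlgHom.id _ _ := by
  apply MvPolynomial.algHom_ext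
  intro i
  fin_cases i <;> simp [phiAuxE, phiAuxE'] <;> linear_combination (X 1 : MvPolynomial (Fin 3) (ZMod 2)) * phiAux_two

noncomputable def phiAuxEquiv : MvPolynomial (Fin 3) (ZMod 2) ≃ₐ[ZMod 2] MvPolynomial (Fin 3) (ZMod 2) :=
  AlgEquiv.ofAlgHom phiAuxE phiAuxE' phiAuxE_comp phiAuxE'_comp

lemma prime_X0 : Prime (X 0 : MvPolynomial (Fin 3) (ZMod 2)) := by
  have h := MulEquiv.prime_iff (MvPolynomial.finSuccEquiv (ZMod 2) 2).toMulEquiv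
    (p := (X 0 : MvPolynomial (Fin 3) (ZMod 2)))
  rw [← h]
  simpa [MvPolynomial.finSuccEquiv_X_zero] using
    (Polynomial.prime_X : Prime (Polynomial.X (R := MvPolynomial (Fin 2) (ZMod 2))))

lemma prime_X1_add_X2 : Prime (X 1 + X 2 : MvPolynomial (Fin 3) (ZMod 2)) := by
  have h := MulEquiv.prime_iff phiAuxEquiv.toMulEquiv (p := (X 0 : MvPolynomial (Fin 3) (ZMod 2)))
  have hx : phiAuxEquiv.toMulEquiv (X 0) = X 1 + X 2 := by
    simp [phiAuxEquiv, phiAuxE]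
  rw [hx] at h
  exact h.mpr prime_X0

end PhiAux

theorem Y_add_Z_divides_phi_d_char_two
    (d : ℕ) (hd3 : 3 ≤ d) (hdodd : Odd d)
    (φ : MvPolynomial (Fin 3) (ZMod 2))
    (hφ : (X 0 + X 1) * (X 0 + X 2) * φ =
      X 0 ^ d + X 1 ^ d + X 2 ^ d + (X 0 + X 1 + X 2) ^ d) :
    (X 1 + X 2) ∣ φ ∧ ¬ (X 1 + X 2) ^ 2 ∣ φ := by
  set P : MvPolynomial (Fin 3) (ZMod 2) := X 1 + X 2 with hP
  have hprime : Prime P := prime_X1_add_X2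
  -- the evaluation at (1,0,0)
  set v : Fin 3 → ZMod 2 := fun i => if i = 0 then 1 else 0 with hv
  have hPv : eval v P = 0 := by simp [hP, hv]
  have hnd : ∀ q : MvPolynomial (Fin 3) (ZMod 2), eval v q = 1 → ¬ P ∣ q := by
    intro q hq hdvd
    have := map_dvd (eval v) hdvd
    rw [hPv, hq, zero_dvd_iff] at this
    exact one_ne_zero this
  have hA : ¬ P ∣ (X 0 + X 1) := hnd _ (by simp [hv])
  have hB : ¬ P ∣ (X 0 + X 2) := hnd _ (by simp [hv])
  -- P divides the RHS
  have hdvdS : P ∣ X 0 ^ d + X 1 ^ d + X 2 ^ d + (X 0 + X 1 + X 2) ^ d := by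
    have h1 : P ∣ X 1 ^ d + X 2 ^ d := by
      have := sub_dvd_pow_sub_pow (X 1 : MvPolynomial (Fin 3) (ZMod 2)) (X 2) d
      rwa [CharTwo.sub_eq_add, CharTwo.sub_eq_add] at this
    have h2 : P ∣ X 0 ^ d + (X 0 + X 1 + X 2) ^ d := by
      have := sub_dvd_pow_sub_pow (X 0 : MvPolynomial (Fin 3) (ZMod 2)) (X 0 + X 1 + X 2) d
      rw [CharTwo.sub_eq_add, CharTwo.sub_eq_add] at this
      have hx : (X 0 : MvPolynomial (Fin 3) (ZMod 2)) + (X 0 + X 1 + X 2) = P := by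
        rw [hP]; linear_combination (X 0 : MvPolynomial (Fin 3) (ZMod 2)) * phiAux_two
      rwa [hx] at this
    have : (X 0 : MvPolynomial (Fin 3) (ZMod 2)) ^ d + X 1 ^ d + X 2 ^ d + (X 0 + X 1 + X 2) ^ d
        = (X 1 ^ d + X 2 ^ d) + (X 0 ^ d + (X 0 + X 1 + X 2) ^ d) := by ring
    rw [this]
    exact dvd_add h1 h2
  rw [← hφ] at hdvdS
  have hφdvd : P ∣ φ := by
    rcases (hprime.dvd_mul.mp hdvdS) with h | h
    · rcases hprime.dvd_mul.mp h with h' | h'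
      · exact absurd h' hA
      · exact absurd h' hB
    · exact h
  refine ⟨hφdvd, ?_⟩
  rintro ⟨ψ, hψ⟩
  -- derivative wrt variable 2
  have hcast : ((d : MvPolynomial (Fin 3) (ZMod 2))) = 1 := by
    obtain ⟨k, rfl⟩ := hdodd
    push_cast
    rw [show ((2 : MvPolynomial (Fin 3) (ZMod 2))) = 0 from CharTwo.two_eq_zero]
    ring
  have hDder := congrArg (pderiv 2) hφ
  rw [map_add, map_add, map_add, pderiv_mul, pderiv_mul, pderiv_pow, pderiv_pow, pderiv_pow,
    pderiv_pow] at hDder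
  simp only [map_add, pderiv_X_self, pderiv_X_of_ne (show (0 : Fin 3) ≠ 2 by decide),
    pderiv_X_of_ne (show (1 : Fin 3) ≠ 2 by decide), hcast] at hDder
  ring_nf at hDder
  -- P divides pderiv 2 φ
  have hDdvd : P ∣ pderiv 2 φ := by
    rw [hψ, show P ^ 2 * ψ = P * (P * ψ) by ring, pderiv_mul, pderiv_mul]
    have hp2 : pderiv 2 P = 1 := by
      rw [hP, map_add, pderiv_X_self, pderiv_X_of_ne (show (1 : Fin 3) ≠ 2 by decide)]
      ring
    rw [hp2]
    exact dvd_add (by rw [one_mul]; exact dvd_mul_right P ψ) (dvd_mul_right P _)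
  have hR : P ∣ X 2 ^ (d - 1) + (X 0 + X 2 + X 1) ^ (d - 1) := by
    rw [← hDder]
    obtain ⟨a, ha⟩ := hφdvd
    obtain ⟨b, hb⟩ := hDdvd
    rw [hb, ha]
    exact ⟨X 0 * X 2 * b + X 0 * X 1 * b + X 0 * a + X 0 ^ 2 * b + X 2 * X 1 * b + X 1 * a,
      by ring⟩
  have hev := map_dvd (eval v) hR
  rw [hPv, zero_dvd_iff] at hev
  have hd1 : d - 1 ≠ 0 := by omega
  simp [hv, zero_pow hd1] at hev
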